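/- arXiv:1503.07189 — 2 statements merged into one kernel-verified Lean document; each statement's English description precedes it below -/
import Mathlib

section
/- If x : S × A → ℝ≥0 satisfies the average-reward LP constraints — for all s, Σ_a x(s,a) = Σ_{s',a'} x(s',a')·P(s',a')(s), and Σ_{s,a} x(s,a) = 1 — then the marginal μ(s) = Σ_a x(s,a) is a stationary distribution of the Markov chain induced by the policy f(s,a) = x(s,a)/Σ_{a'} x(s,a') (defined on states s with μ(s) > 0): for all s, μ(s) = Σ_{s'} μ(s')·Σ_{a'} f(s',a')·P(s',a')(s). -/
open scoped Classical

/-- A feasible point of the average-reward LP yields a stationary distribution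
`μ(s) = ∑_a x(s,a)` for the Markov chain induced by the policy
`f(s,a) = x(s,a) / ∑_{a'} x(s,a')`. -/
theorem stmt5 {S A : Type*} [Fintype S] [Fintype A] (P : S → A → S → ℝ)
    (Act : S → Finset A)
    (hAct : ∀ s a, a ∈ Act s ↔ ∃ s', 0 < P s a s')
    (hPnn : ∀ s a s', 0 ≤ P s a s')
    (hPsum : ∀ s, ∀ a ∈ Act s, ∑ s', P s a s' = 1)
    (x : S → A → ℝ) (hxnn : ∀ s a, 0 ≤ x s a)
    (hbal : ∀ s, ∑ a ∈ Act s, x s a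
      = ∑ s', ∑ a' ∈ Act s', x s' a' * P s' a' s)
    (hmass : ∑ s, ∑ a ∈ Act s, x s a = 1)
    (μ : S → ℝ) (hμ : ∀ s, μ s = ∑ a ∈ Act s, x s a)
    (f : S → A → ℝ) (hf : ∀ s a, f s a = x s a / ∑ a' ∈ Act s, x s a') :
    ∀ s, μ s = ∑ s', μ s' * ∑ a' ∈ Act s', f s' a' * P s' a' s := by
  intro s
  rw [hμ, hbal]
  refine Finset.sum_congr rfl fun s' _ => ?_
  rw [Finset.mul_sum]
  refine Finset.sum_congr rfl fun a' ha' => ?_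
  rw [hf, hμ]
  by_cases h : ∑ a'' ∈ Act s', x s' a'' = 0
  · have hx0 : x s' a' = 0 := by
      have := Finset.sum_eq_zero_iff_of_nonneg (fun a _ => hxnn s' a) |>.mp h a' ha'
      exact this
    simp [h, hx0]
  · field_simp
end

section
/- Suppose x ≥ 0 satisfies the discounted-flow constraints Σ_a x(s,a) − γ·Σ_{s',a'} x(s',a')·P(s',a')(s) = u_0(s) for all s, with γ ∈ (0,1) and u_0 a probability distribution. Then the marginal d(s) = Σ_a x(s,a) equals the discounted occupancy measure of the induced policy f(s,a) = x(s,a)/d(s) on {s : d(s) > 0}: d satisfies d = u_0 + γ·(P^f)^T d, where P^f(s,s') = Σ_a f(s,a)·P(s,a)(s'), and hence d(s) = Σ_{n≥0} γ^n Pr^f_{u_0}[X_n = s]. -/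
open scoped Classical

/-- The marginal `d(s) = ∑_a x(s,a)` of a feasible point of the discounted LP
satisfies `d = u0 + γ (P^f)ᵀ d` for the induced policy
`f(s,a) = x(s,a)/d(s)`, and hence equals the discounted occupancy measure
`d(s) = ∑_n γⁿ Pr^f_{u0}[Xₙ = s]`. -/
theorem stmt17 {S A : Type*} [Fintype S] [Fintype A]
    (P : S → A → S → ℝ) (u0 : S → ℝ) (γ : ℝ) (hγ0 : 0 < γ) (hγ1 : γ < 1)
    (hu0nn : ∀ s, 0 ≤ u0 s) (hu0sum : ∑ s, u0 s = 1)
    (Act : S → Finset A) (hAct : ∀ s a, a ∈ Act s ↔ ∃ s', 0 < P s a s')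
    (hPnn : ∀ s a s', 0 ≤ P s a s')
    (hPsum : ∀ s, ∀ a ∈ Act s, ∑ s', P s a s' = 1)
    (x : S → A → ℝ) (hxnn : ∀ s a, 0 ≤ x s a)
    (hsupp : ∀ s a, a ∉ Act s → x s a = 0)
    (hcon : ∀ s, ∑ a ∈ Act s, x s a
      - γ * ∑ s', ∑ a' ∈ Act s', x s' a' * P s' a' s = u0 s)
    (d : S → ℝ) (hd : ∀ s, d s = ∑ a ∈ Act s, x s a)
    (f : S → A → ℝ) (hf : ∀ s a, f s a = x s a / d s)
    (Pf : S → S → ℝ) (hPf : ∀ s s', Pf s s' = ∑ a ∈ Act s, f s a * P s a s')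
    -- `q n s` : probability of being at `s` at time `n` under `f` from `u0`
    (q : ℕ → S → ℝ) (hq0 : ∀ s, q 0 s = u0 s)
    (hqS : ∀ n s, q (n + 1) s = ∑ s', q n s' * Pf s' s) :
    (∀ s, d s = u0 s + γ * ∑ s', d s' * Pf s' s) ∧
    (∀ s, HasSum (fun n => γ ^ n * q n s) (d s)) := by
  have hdnn : ∀ s, 0 ≤ d s := by
    intro s; rw [hd]; exact Finset.sum_nonneg fun a _ => hxnn s a
  -- if d s = 0 then x s a = 0 for all a in Act s
  have hx0 : ∀ s, d s = 0 → ∀ a ∈ Act s, x s a = 0 := by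
    intro s hs a ha
    have := (Finset.sum_eq_zero_iff_of_nonneg (fun a _ => hxnn s a)).mp
      ((hd s).symm.trans hs)
    exact this a ha
  -- key: d s' * Pf s' s = ∑ a ∈ Act s', x s' a * P s' a s
  have key : ∀ s' s, d s' * Pf s' s = ∑ a ∈ Act s', x s' a * P s' a s := by
    intro s' s
    rw [hPf, Finset.mul_sum]
    refine Finset.sum_congr rfl fun a ha => ?_
    rw [hf]
    by_cases h : d s' = 0
    · rw [h, hx0 s' h a ha]; ring
    · field_simp
  have part1 : ∀ s, d s = u0 s + γ * ∑ s', d s' * Pf s' s := by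
    intro s
    have := hcon s
    rw [hd]
    simp only [key]
    linarith
  refine ⟨part1, ?_⟩
  -- nonnegativity of Pf
  have hPfnn : ∀ s s', 0 ≤ Pf s s' := by
    intro s s'
    rw [hPf]
    refine Finset.sum_nonneg fun a _ => mul_nonneg ?_ (hPnn s a s')
    rw [hf]; exact div_nonneg (hxnn s a) (hdnn s)
  -- row sums of Pf at most 1
  have hPfrow : ∀ s, ∑ s', Pf s s' ≤ 1 := by
    intro s
    have : ∑ s', Pf s s' = ∑ a ∈ Act s, f s a * ∑ s', P s a s' := by
      simp only [hPf, Finset.mul_sum]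
      rw [Finset.sum_comm]
    rw [this]
    have h1 : ∑ a ∈ Act s, f s a * ∑ s', P s a s' = ∑ a ∈ Act s, f s a := by
      refine Finset.sum_congr rfl fun a ha => ?_
      rw [hPsum s a ha, mul_one]
    rw [h1]
    have h2 : ∑ a ∈ Act s, f s a = d s / d s := by
      simp only [hf, ← Finset.sum_div, ← hd]
    rw [h2]
    by_cases h : d s = 0
    · simp [h]
    · rw [div_self h]
  -- q nonneg
  have hqnn : ∀ n s, 0 ≤ q n s := by
    intro n
    induction n with
    | zero => intro s; rw [hq0]; exact hu0nn s
    | succ n ih =>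
      intro s; rw [hqS]
      exact Finset.sum_nonneg fun s' _ => mul_nonneg (ih s') (hPfnn s' s)
  -- auxiliary iterates w n = (Pfᵀ)^n d
  set w : ℕ → S → ℝ := fun n => (fun v s => ∑ s', v s' * Pf s' s)^[n] d with hw
  have hw0 : w 0 = d := rfl
  have hwS : ∀ n s, w (n + 1) s = ∑ s', w n s' * Pf s' s := by
    intro n s
    simp only [hw, Function.iterate_succ', Function.comp_apply]
  have hwnn : ∀ n s, 0 ≤ w n s := by
    intro n
    induction n with
    | zero => exact hdnn
    | succ n ih =>
      intro s; rw [hwS]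
      exact Finset.sum_nonneg fun s' _ => mul_nonneg (ih s') (hPfnn s' s)
  -- total mass of w is bounded
  have hwtot : ∀ n, ∑ s, w n s ≤ ∑ s, d s := by
    intro n
    induction n with
    | zero => exact le_refl _
    | succ n ih =>
      calc ∑ s, w (n + 1) s = ∑ s', w n s' * ∑ s, Pf s' s := by
            simp only [hwS, Finset.mul_sum]; rw [Finset.sum_comm]
        _ ≤ ∑ s', w n s' * 1 :=
            Finset.sum_le_sum fun s' _ =>
              mul_le_mul_of_nonneg_left (hPfrow s') (hwnn n s')
        _ = ∑ s', w n s' := by simp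
        _ ≤ ∑ s, d s := ih
  -- w n = q n + γ * (transition of w n)
  have hwq : ∀ n s, w n s = q n s + γ * ∑ s', w n s' * Pf s' s := by
    intro n
    induction n with
    | zero =>
      intro s
      rw [hw0, hq0]
      exact part1 s
    | succ n ih =>
      intro s
      rw [hwS, hqS]
      have : ∑ s', w n s' * Pf s' s
          = ∑ s', (q n s' + γ * ∑ s'', w n s'' * Pf s'' s') * Pf s' s := by
        refine Finset.sum_congr rfl fun s' _ => ?_
        rw [← ih s']
      rw [this]
      simp only [add_mul, Finset.sum_add_distrib]
      congr 1
      rw [Finset.mul_sum]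
      refine Finset.sum_congr rfl fun s' _ => ?_
      rw [hwS]
      ring
  -- main identity: d s = ∑_{k<n} γ^k q k s + γ^n w n s
  have main : ∀ n s, d s = (∑ k ∈ Finset.range n, γ ^ k * q k s) + γ ^ n * w n s := by
    intro n
    induction n with
    | zero => intro s; simp [hw0]
    | succ n ih =>
      intro s
      rw [Finset.sum_range_succ]
      have h1 := hwq n s
      have h2 : γ ^ n * w n s = γ ^ n * q n s + γ ^ (n + 1) * w (n + 1) s := by
        rw [hwS, h1]; ring
      rw [ih s, h2]; ring
  intro s
  rw [hasSum_iff_tendsto_nat_of_nonneg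
    (fun n => mul_nonneg (pow_nonneg hγ0.le n) (hqnn n s))]
  have heq : ∀ n, ∑ k ∈ Finset.range n, γ ^ k * q k s = d s - γ ^ n * w n s := by
    intro n; rw [main n s]; ring
  simp only [heq]
  have htend : Filter.Tendsto (fun n => γ ^ n * w n s) Filter.atTop (nhds 0) := by
    have hb : ∀ n, |γ ^ n * w n s| ≤ γ ^ n * ∑ t, d t := by
      intro n
      rw [abs_of_nonneg (mul_nonneg (pow_nonneg hγ0.le n) (hwnn n s))]
      refine mul_le_mul_of_nonneg_left ?_ (pow_nonneg hγ0.le n)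
      calc w n s ≤ ∑ t, w n t :=
            Finset.single_le_sum (fun t _ => hwnn n t) (Finset.mem_univ s)
        _ ≤ ∑ t, d t := hwtot n
    have h0 : Filter.Tendsto (fun n => γ ^ n * ∑ t, d t) Filter.atTop (nhds 0) := by
      have := tendsto_pow_atTop_nhds_zero_of_lt_one hγ0.le hγ1
      simpa using this.mul_const (∑ t, d t)
    exact squeeze_zero_norm hb h0
  have := (Filter.Tendsto.const_sub (d s) htend)
  simpa using this
end
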